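/- Let V be finite, E the complete graph's edge set, and x : E → ℝ≥0 feasible for the path LP: x(δ(U)) ≥ 2 for all nonempty U ⊆ V \ {s,t} and x(δ(U)) ≥ 1 for all s ∈ U ⊆ V \ {t}. Then for every narrow cut C (i.e. C = δ(U) with s ∈ U, t ∉ U, x(C) < 2) there exists a pair of vertices v, w ∈ V such that C is the unique narrow cut separating v from w. -/

import Mathlib

open Finset

/-- The value `x(δ(U))` of the cut induced by `U` in the complete graph on `V`,
with edge weights `x` (given on unordered pairs). -/
noncomputable def cutVal {V : Type*} [Fintype V] [DecidableEq V]
    (x : Sym2 V → ℝ) (U : Finset V) : ℝ :=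
  ∑ v ∈ U, ∑ w ∈ Uᶜ, x s(v, w)

section aux

variable {V : Type*} [Fintype V] [DecidableEq V]

noncomputable def fval (x : Sym2 V → ℝ) (P Q : Finset V) : ℝ :=
  ∑ v ∈ P, ∑ w ∈ Q, x s(v, w)

lemma fval_nonneg (x : Sym2 V → ℝ) (hx : ∀ e, 0 ≤ x e) (P Q : Finset V) :
    0 ≤ fval x P Q :=
  Finset.sum_nonneg fun _ _ => Finset.sum_nonneg fun _ _ => hx _

lemma fval_symm (x : Sym2 V → ℝ) (P Q : Finset V) : fval x P Q = fval x Q P := by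
  rw [fval, Finset.sum_comm]
  simp only [fval]
  congr 1
  ext w
  congr 1
  ext v
  rw [Sym2.eq_swap]

lemma fval_union_left (x : Sym2 V → ℝ) {P P' : Finset V} (h : Disjoint P P') (Q : Finset V) :
    fval x (P ∪ P') Q = fval x P Q + fval x P' Q := Finset.sum_union h

lemma fval_union_right (x : Sym2 V → ℝ) (P : Finset V) {Q Q' : Finset V} (h : Disjoint Q Q') :
    fval x P (Q ∪ Q') = fval x P Q + fval x P Q' := by
  simp only [fval, Finset.sum_union h, Finset.sum_add_distrib]

lemma cutVal_eq_fval (x : Sym2 V → ℝ) (U : Finset V) : cutVal x U = fval x U Uᶜ := rfl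

lemma posimodular (x : Sym2 V → ℝ) (hx : ∀ e, 0 ≤ x e) (U W : Finset V) :
    cutVal x (U \ W) + cutVal x (W \ U) ≤ cutVal x U + cutVal x W := by
  set A := U ∩ W with hA
  set B := U \ W with hB
  set C := W \ U with hC
  set D := (U ∪ W)ᶜ with hD
  have hU : U = A ∪ B := by ext a; simp [hA, hB]; tauto
  have hUc : Uᶜ = C ∪ D := by ext a; simp [hC, hD]; tauto
  have hW : W = A ∪ C := by ext a; simp [hA, hC]; tauto
  have hWc : Wᶜ = B ∪ D := by ext a; simp [hB, hD]; tauto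
  have hBc : Bᶜ = A ∪ (C ∪ D) := by ext a; simp [hA, hB, hC, hD]; tauto
  have hCc : Cᶜ = A ∪ (B ∪ D) := by ext a; simp [hA, hB, hC, hD]; tauto
  have dAB : Disjoint A B := by rw [Finset.disjoint_left]; intro a ha hb; simp [hA, hB] at ha hb; tauto
  have dAC : Disjoint A C := by rw [Finset.disjoint_left]; intro a ha hb; simp [hA, hC] at ha hb; tauto
  have dAD : Disjoint A D := by rw [Finset.disjoint_left]; intro a ha hb; simp [hA, hD] at ha hb; tauto
  have dBD : Disjoint B D := by rw [Finset.disjoint_left]; intro a ha hb; simp [hB, hD] at ha hb; tauto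
  have dCD : Disjoint C D := by rw [Finset.disjoint_left]; intro a ha hb; simp [hC, hD] at ha hb; tauto
  have dBC : Disjoint B C := by rw [Finset.disjoint_left]; intro a ha hb; simp [hB, hC] at ha hb; tauto
  have dACD : Disjoint A (C ∪ D) := Finset.disjoint_union_right.mpr ⟨dAC, dAD⟩
  have dABD : Disjoint A (B ∪ D) := Finset.disjoint_union_right.mpr ⟨dAB, dAD⟩
  have e1 : cutVal x U = fval x A C + fval x A D + (fval x B C + fval x B D) := by
    rw [cutVal_eq_fval, hUc]
    conv_lhs => rw [hU]
    rw [fval_union_left x dAB, fval_union_right x A dCD, fval_union_right x B dCD]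
  have e2 : cutVal x W = fval x A B + fval x A D + (fval x C B + fval x C D) := by
    rw [cutVal_eq_fval, hWc]
    conv_lhs => rw [hW]
    rw [fval_union_left x dAC, fval_union_right x A dBD, fval_union_right x C dBD]
  have e3 : cutVal x B = fval x B A + (fval x B C + fval x B D) := by
    rw [cutVal_eq_fval, hBc, fval_union_right x B dACD.symm.symm, fval_union_right x B dCD]
  have e4 : cutVal x C = fval x C A + (fval x C B + fval x C D) := by
    rw [cutVal_eq_fval, hCc, fval_union_right x C dABD.symm.symm, fval_union_right x C dBD]
  have s1 : fval x B A = fval x A B := fval_symm x B A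
  have s2 : fval x C A = fval x A C := fval_symm x C A
  have nn : 0 ≤ fval x A D := fval_nonneg x hx A D
  linarith

end aux

/-- For every narrow cut `δ(U₀)` of a feasible path-LP solution there is a pair of
vertices `v, w` such that `δ(U₀)` is the unique narrow cut separating `v` from `w`. -/
theorem stmt_14 {V : Type*} [Fintype V] [DecidableEq V] (s t : V) (hst : s ≠ t)
    (x : Sym2 V → ℝ) (hx : ∀ e, 0 ≤ x e)
    (h2 : ∀ U : Finset V, U.Nonempty → U ⊆ univ \ {s, t} → 2 ≤ cutVal x U)
    (h1 : ∀ U : Finset V, s ∈ U → U ⊆ univ \ {t} → 1 ≤ cutVal x U)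
    (U₀ : Finset V) (hsU₀ : s ∈ U₀) (htU₀ : t ∉ U₀) (hnarrow : cutVal x U₀ < 2) :
    ∃ v w : V, Xor' (v ∈ U₀) (w ∈ U₀) ∧
      ∀ U : Finset V, s ∈ U → t ∉ U → cutVal x U < 2 →
        Xor' (v ∈ U) (w ∈ U) → U = U₀ := by
  classical
  -- narrow cuts form a chain
  have chain : ∀ U W : Finset V, s ∈ U → t ∉ U → cutVal x U < 2 →
      s ∈ W → t ∉ W → cutVal x W < 2 → U ⊆ W ∨ W ⊆ U := by
    intro U W hsU htU hU hsW htW hW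
    by_contra hc
    push_neg at hc
    obtain ⟨h1c, h2c⟩ := hc
    have hBne : (U \ W).Nonempty := by rwa [Finset.sdiff_nonempty]
    have hCne : (W \ U).Nonempty := by rwa [Finset.sdiff_nonempty]
    have hBsub : U \ W ⊆ univ \ {s, t} := by
      intro a ha
      simp only [Finset.mem_sdiff, Finset.mem_univ, true_and, Finset.mem_insert,
        Finset.mem_singleton] at ha ⊢
      rintro (rfl | rfl)
      · exact ha.2 hsW
      · exact htU ha.1
    have hCsub : W \ U ⊆ univ \ {s, t} := by
      intro a ha
      simp only [Finset.mem_sdiff, Finset.mem_univ, true_and, Finset.mem_insert,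
        Finset.mem_singleton] at ha ⊢
      rintro (rfl | rfl)
      · exact ha.2 hsU
      · exact htW ha.1
    have hb := h2 _ hBne hBsub
    have hcc := h2 _ hCne hCsub
    have := posimodular x hx U W
    linarith
  -- choose v
  set S : Finset (Finset V) :=
    univ.filter (fun U => (s ∈ U ∧ t ∉ U ∧ cutVal x U < 2) ∧ U ⊂ U₀) with hS
  have hSmem : ∀ U, U ∈ S ↔ (s ∈ U ∧ t ∉ U ∧ cutVal x U < 2) ∧ U ⊂ U₀ := by
    intro U; simp [hS]
  obtain ⟨v, hvU₀, hv⟩ : ∃ v, v ∈ U₀ ∧ ∀ U ∈ S, v ∉ U := by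
    rcases S.eq_empty_or_nonempty with h | h
    · exact ⟨s, hsU₀, fun U hU => absurd hU (by simp [h])⟩
    · obtain ⟨M, hM, hMmax⟩ : ∃ M ∈ S, ∀ U ∈ S, ¬ M < U := by
        obtain ⟨M, hM⟩ := Finset.exists_maximal h
        exact ⟨M, hM.1, fun U hU hlt => hlt.2 (hM.2 hU hlt.1)⟩
      have hMU₀ : M ⊂ U₀ := ((hSmem M).mp hM).2
      obtain ⟨v, hv1, hv2⟩ := Finset.exists_of_ssubset hMU₀
      refine ⟨v, hv1, fun U hU hvU => ?_⟩
      have hUM : U ⊆ M := by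
        obtain ⟨⟨hsU, htU, hcU⟩, hUU₀⟩ := (hSmem U).mp hU
        obtain ⟨⟨hsM, htM, hcM⟩, _⟩ := (hSmem M).mp hM
        rcases chain U M hsU htU hcU hsM htM hcM with h' | h'
        · exact h'
        · rcases h'.ssubset_or_eq.symm with h'' | h''
          · exact h''.ge
          · exact absurd h'' (hMmax U hU)
      exact hv2 (hUM hvU)
  -- choose w
  set S' : Finset (Finset V) :=
    univ.filter (fun U => (s ∈ U ∧ t ∉ U ∧ cutVal x U < 2) ∧ U₀ ⊂ U) with hS'
  have hS'mem : ∀ U, U ∈ S' ↔ (s ∈ U ∧ t ∉ U ∧ cutVal x U < 2) ∧ U₀ ⊂ U := by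
    intro U; simp [hS']
  obtain ⟨w, hwU₀, hw⟩ : ∃ w, w ∉ U₀ ∧ ∀ U ∈ S', w ∈ U := by
    rcases S'.eq_empty_or_nonempty with h | h
    · exact ⟨t, htU₀, fun U hU => absurd hU (by simp [h])⟩
    · obtain ⟨M, hM, hMmin⟩ : ∃ M ∈ S', ∀ U ∈ S', ¬ U < M := by
        obtain ⟨M, hM⟩ := Finset.exists_minimal h
        exact ⟨M, hM.1, fun U hU hlt => hlt.2 (hM.2 hU hlt.1)⟩
      have hU₀M : U₀ ⊂ M := ((hS'mem M).mp hM).2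
      obtain ⟨w, hw1, hw2⟩ := Finset.exists_of_ssubset hU₀M
      refine ⟨w, hw2, fun U hU => ?_⟩
      have hMU : M ⊆ U := by
        obtain ⟨⟨hsU, htU, hcU⟩, hUU₀⟩ := (hS'mem U).mp hU
        obtain ⟨⟨hsM, htM, hcM⟩, _⟩ := (hS'mem M).mp hM
        rcases chain M U hsM htM hcM hsU htU hcU with h' | h'
        · exact h'
        · rcases h'.ssubset_or_eq.symm with h'' | h''
          · exact h''.ge
          · exact absurd h'' (hMmin U hU)
      exact hMU hw1
  refine ⟨v, w, Or.inl ⟨hvU₀, hwU₀⟩, ?_⟩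
  intro U hsU htU hcU hxor
  rcases chain U U₀ hsU htU hcU hsU₀ htU₀ hnarrow with h | h
  · rcases h.ssubset_or_eq.symm with h' | h'
    · exact h'
    · exfalso
      have hUS : U ∈ S := (hSmem U).mpr ⟨⟨hsU, htU, hcU⟩, h'⟩
      have hvU : v ∉ U := hv U hUS
      have hwU : w ∉ U := fun hwU => hwU₀ (h hwU)
      rcases hxor with ⟨h1', _⟩ | ⟨h1', _⟩
      · exact hvU h1'
      · exact hwU h1'
  · rcases h.ssubset_or_eq.symm with h' | h'
    · exact h'.symm
    · exfalso
      have hUS : U ∈ S' := (hS'mem U).mpr ⟨⟨hsU, htU, hcU⟩, h'⟩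
      have hwU : w ∈ U := hw U hUS
      have hvU : v ∈ U := h hvU₀
      rcases hxor with ⟨_, h2'⟩ | ⟨_, h2'⟩
      · exact h2' hwU
      · exact h2' hvU
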